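/- Let α > 0 and 0 ≤ a < b. For fixed x ∈ ℝ³, x ≠ 0, and a C¹ function φ: [a,b] → ℝ, the following integration by parts identity holds for all t ∈ (a, b]: −∫_a^t (∂/∂τ)[G_α(x, t−τ)] φ(τ) dτ = G_α(x, t−a) φ(a) + ∫_a^t G_α(x, t−τ) φ'(τ) dτ. -/

import Mathlib

open Set

/-- The 3D heat kernel, extended by zero for `t ≤ 0`. -/
noncomputable def heatKernel (α : ℝ) (x : EuclideanSpace ℝ (Fin 3)) (t : ℝ) : ℝ :=
  if 0 < t then (4 * Real.pi * α * t) ^ (-(3 : ℝ) / 2) * Real.exp (-‖x‖ ^ 2 / (4 * α * t))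
  else 0

namespace HeatIBP

open Real Filter Topology

noncomputable def psi (c r : ℝ) (s : ℝ) : ℝ :=
  if 0 < s then s ^ (-r) * Real.exp (-c / s) else 0

lemma psi_nonneg (c r s : ℝ) : 0 ≤ psi c r s := by
  unfold psi
  split_ifs with h
  · exact mul_nonneg (Real.rpow_nonneg h.le _) (Real.exp_nonneg _)
  · exact le_refl 0

lemma psi_le (c r : ℝ) (hc : 0 < c) (k : ℕ) {s : ℝ} (hs : 0 < s) :
    psi c r s ≤ ((k.factorial : ℝ) / c ^ k) * s ^ ((k : ℝ) - r) := by
  rw [psi, if_pos hs]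
  have hcs : 0 < c / s := div_pos hc hs
  have h2 : (c / s) ^ k / (k.factorial : ℝ) ≤ Real.exp (c / s) :=
    Real.pow_div_factorial_le_exp (c / s) hcs.le k
  have hek : (0:ℝ) < (c / s) ^ k / (k.factorial : ℝ) := by positivity
  have h3 : Real.exp (-c / s) ≤ ((c / s) ^ k / (k.factorial : ℝ))⁻¹ := by
    rw [neg_div, Real.exp_neg]
    exact inv_anti₀ hek h2
  have h4 : ((c / s) ^ k / (k.factorial : ℝ))⁻¹ = (k.factorial : ℝ) / c ^ k * s ^ k := by
    have hfk : (0:ℝ) < (k.factorial : ℝ) := by positivity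
    field_simp
    rw [← mul_pow, div_mul_cancel₀ c hs.ne']
  calc s ^ (-r) * Real.exp (-c / s)
      ≤ s ^ (-r) * ((k.factorial : ℝ) / c ^ k * s ^ k) := by
        apply mul_le_mul_of_nonneg_left _ (Real.rpow_nonneg hs.le _)
        rw [← h4]; exact h3
    _ = ((k.factorial : ℝ) / c ^ k) * s ^ ((k : ℝ) - r) := by
        rw [sub_eq_neg_add, Real.rpow_add hs, Real.rpow_natCast]
        ring

lemma psi_tendsto (c r : ℝ) (hc : 0 < c) : Tendsto (psi c r) (𝓝[>] 0) (𝓝 0) := by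
  set k : ℕ := ⌈r⌉₊ + 1 with hk
  have hkr : (0:ℝ) < (k : ℝ) - r := by
    have h := Nat.le_ceil r
    have : ((⌈r⌉₊ : ℝ)) < (k : ℝ) := by rw [hk]; push_cast; linarith
    linarith
  have h0 : Tendsto (fun s : ℝ => ((k.factorial : ℝ) / c ^ k) * s ^ ((k : ℝ) - r))
      (𝓝[>] 0) (𝓝 0) := by
    have hcontn : ContinuousAt (fun s : ℝ => s ^ ((k : ℝ) - r)) 0 :=
      Real.continuousAt_rpow_const 0 _ (Or.inr hkr.le)
    have h := hcontn.tendsto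
    rw [Real.zero_rpow hkr.ne'] at h
    simpa using (h.const_mul ((k.factorial : ℝ) / c ^ k)).mono_left nhdsWithin_le_nhds
  refine squeeze_zero' ?_ ?_ h0
  · filter_upwards [self_mem_nhdsWithin] with s _ using psi_nonneg c r s
  · filter_upwards [self_mem_nhdsWithin] with s hs using psi_le c r hc k hs

lemma psi_continuous (c r : ℝ) (hc : 0 < c) : Continuous (psi c r) := by
  rw [continuous_iff_continuousAt]
  intro s
  rcases lt_trichotomy s 0 with hs | rfl | hs
  · have he : psi c r =ᶠ[𝓝 s] fun _ => (0:ℝ) := by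
      filter_upwards [Iio_mem_nhds hs] with y hy
      have hy' : ¬ 0 < y := not_lt.mpr (le_of_lt (mem_Iio.mp hy))
      simp [psi, hy']
    exact continuousAt_const.congr he.symm
  · have h0 : psi c r 0 = 0 := by simp [psi]
    rw [ContinuousAt, h0]
    have hsup : Tendsto (psi c r) (𝓝[≤] (0:ℝ) ⊔ 𝓝[>] (0:ℝ)) (𝓝 0) := by
      rw [tendsto_sup]
      constructor
      · refine Tendsto.congr' ?_ tendsto_const_nhds
        filter_upwards [self_mem_nhdsWithin] with y (hy : y ≤ 0)
        have hy' : ¬ 0 < y := not_lt.mpr hy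
        simp [psi, hy']
      · exact psi_tendsto c r hc
    rwa [nhdsLE_sup_nhdsGT] at hsup
  · have he : psi c r =ᶠ[𝓝 s] fun y => y ^ (-r) * Real.exp (-c / y) := by
      filter_upwards [Ioi_mem_nhds hs] with y hy
      simp [psi, mem_Ioi.mp hy]
    refine ContinuousAt.congr ?_ he.symm
    have h1 : ContinuousAt (fun y : ℝ => y ^ (-r)) s :=
      Real.continuousAt_rpow_const s _ (Or.inl hs.ne')
    have h2 : ContinuousAt (fun y : ℝ => Real.exp (-c / y)) s :=
      Real.continuous_exp.continuousAt.comp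
        ((continuousAt_const.div continuousAt_id hs.ne'))
    exact h1.mul h2

lemma psi_hasDerivAt (c r : ℝ) (hc : 0 < c) (s : ℝ) :
    HasDerivAt (psi c r) (c * psi c (r + 2) s - r * psi c (r + 1) s) s := by
  rcases lt_trichotomy s 0 with hs | rfl | hs
  · have he : psi c r =ᶠ[𝓝 s] fun _ => (0:ℝ) := by
      filter_upwards [Iio_mem_nhds hs] with y hy
      have hy' : ¬ 0 < y := not_lt.mpr (le_of_lt (mem_Iio.mp hy))
      simp [psi, hy']
    have h0 : HasDerivAt (fun _ : ℝ => (0:ℝ)) 0 s := hasDerivAt_const s 0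
    have h1 := h0.congr_of_eventuallyEq he
    have hval : c * psi c (r + 2) s - r * psi c (r + 1) s = 0 := by
      simp [psi, not_lt.mpr hs.le]
    rw [hval]; exact h1
  · have hval : c * psi c (r + 2) 0 - r * psi c (r + 1) 0 = 0 := by simp [psi]
    rw [hval, hasDerivAt_iff_tendsto_slope]
    have hsup : Tendsto (slope (psi c r) 0) (𝓝[<] (0:ℝ) ⊔ 𝓝[>] (0:ℝ)) (𝓝 0) := by
      rw [tendsto_sup]
      constructor
      · refine Tendsto.congr' ?_ tendsto_const_nhds
        filter_upwards [self_mem_nhdsWithin] with y (hy : y < 0)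
        have hy' : ¬ 0 < y := not_lt.mpr hy.le
        simp [slope_def_field, psi, hy']
      · refine Tendsto.congr' ?_ (psi_tendsto c (r + 1) hc)
        filter_upwards [self_mem_nhdsWithin] with y (hy : 0 < y)
        have hpow : y ^ (-(r + 1)) = y ^ (-r) * y⁻¹ := by
          rw [show -(r + 1) = -r + (-1) by ring, Real.rpow_add hy, Real.rpow_neg_one]
        simp only [slope_def_field, psi, if_pos hy]
        rw [hpow]
        field_simp
        simp [hy.ne']
    rwa [nhdsLT_sup_nhdsGT] at hsup
  · have hne := hs.ne'
    have h1 : HasDerivAt (fun y : ℝ => y ^ (-r)) (-r * s ^ (-r - 1)) s := by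
      simpa using Real.hasDerivAt_rpow_const (p := -r) (Or.inl hne)
    have h2 : HasDerivAt (fun y : ℝ => -c / y) (c / s ^ 2) s := by
      have h := (hasDerivAt_inv hne).const_mul (-c)
      have heq : (fun y : ℝ => -c * y⁻¹) = fun y : ℝ => -c / y := by
        funext y; rw [div_eq_mul_inv]
      rw [heq] at h
      refine h.congr_deriv ?_
      field_simp
    have h3 : HasDerivAt (fun y : ℝ => Real.exp (-c / y))
        (Real.exp (-c / s) * (c / s ^ 2)) s := h2.exp
    have h4 := h1.mul h3
    have he : (fun y : ℝ => y ^ (-r) * Real.exp (-c / y)) =ᶠ[𝓝 s] psi c r := by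
      filter_upwards [Ioi_mem_nhds hs] with y hy
      simp [psi, mem_Ioi.mp hy]
    have h5 := h4.congr_of_eventuallyEq he.symm
    refine h5.congr_deriv ?_
    have e1 : s ^ (-(r + 1)) = s ^ (-r) * s⁻¹ := by
      rw [show -(r + 1) = -r + (-1) by ring, Real.rpow_add hs, Real.rpow_neg_one]
    have e2 : s ^ (-(r + 2)) = s ^ (-r) * (s ^ 2)⁻¹ := by
      rw [show -(r + 2) = -r + (-1) + (-1) by ring, Real.rpow_add hs, Real.rpow_add hs,
        Real.rpow_neg_one]
      rw [sq, mul_inv]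
      ring
    have e3 : s ^ (-r - 1) = s ^ (-r) * s⁻¹ := by
      rw [show -r - 1 = -r + (-1) by ring, Real.rpow_add hs, Real.rpow_neg_one]
    simp only [psi, if_pos hs]
    rw [e1, e2, e3]
    field_simp
    ring

end HeatIBP

/-- For `α > 0`, `0 ≤ a < b`, `x ≠ 0`, a `C¹` function `φ` on `[a,b]` (with derivative `φ'`)
and `t ∈ (a, b]`:
`−∫_a^t (∂/∂τ)[G_α(x, t−τ)] φ(τ) dτ = G_α(x, t−a) φ(a) + ∫_a^t G_α(x, t−τ) φ'(τ) dτ`. -/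
theorem heatKernel_integration_by_parts_time
    (α : ℝ) (hα : 0 < α) (a b : ℝ) (ha : 0 ≤ a) (hab : a < b)
    (x : EuclideanSpace ℝ (Fin 3)) (hx : x ≠ 0)
    (φ φ' : ℝ → ℝ)
    (hφ : ∀ τ ∈ Icc a b, HasDerivWithinAt φ (φ' τ) (Icc a b) τ)
    (hφ' : ContinuousOn φ' (Icc a b))
    (t : ℝ) (ht : t ∈ Ioc a b) :
    -∫ τ in a..t, deriv (fun τ => heatKernel α x (t - τ)) τ * φ τ =
      heatKernel α x (t - a) * φ a + ∫ τ in a..t, heatKernel α x (t - τ) * φ' τ := by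
  classical
  obtain ⟨hat, htb⟩ := ht
  have htle : a ≤ t := hat.le
  have hxn : 0 < ‖x‖ := norm_pos_iff.mpr hx
  set c := ‖x‖ ^ 2 / (4 * α) with hc_def
  have hc : 0 < c := by positivity
  set C := (4 * Real.pi * α) ^ (-(3 : ℝ) / 2) with hC_def
  have h4pa : (0:ℝ) < 4 * Real.pi * α := by positivity
  -- heat kernel in terms of psi
  have hker : ∀ s : ℝ, heatKernel α x s = C * HeatIBP.psi c (3/2) s := by
    intro s
    unfold heatKernel HeatIBP.psi
    by_cases hs : 0 < s
    · rw [if_pos hs, if_pos hs]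
      have harg : -‖x‖ ^ 2 / (4 * α * s) = -c / s := by
        rw [hc_def]; field_simp
      rw [show (-(3/2 : ℝ)) = (-(3:ℝ)/2) by norm_num]
      rw [Real.mul_rpow h4pa.le hs.le, harg, hC_def]
      ring
    · rw [if_neg hs, if_neg hs, mul_zero]
  set D : ℝ → ℝ := fun s =>
    C * (c * HeatIBP.psi c (3/2 + 2) s - (3/2) * HeatIBP.psi c (3/2 + 1) s) with hD_def
  have hkd : ∀ s, HasDerivAt (heatKernel α x) (D s) s := by
    intro s
    have h := (HeatIBP.psi_hasDerivAt c (3/2) hc s).const_mul C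
    refine h.congr_of_eventuallyEq ?_
    exact Filter.Eventually.of_forall fun y => hker y
  have hDc : Continuous D := by
    apply Continuous.mul continuous_const
    exact (continuous_const.mul (HeatIBP.psi_continuous c _ hc)).sub
      (continuous_const.mul (HeatIBP.psi_continuous c _ hc))
  have hheatc : Continuous (heatKernel α x) := by
    have h := continuous_const.mul (HeatIBP.psi_continuous c (3/2) hc) (f := fun _ : ℝ => C)
    have hfun : heatKernel α x = fun y => C * HeatIBP.psi c (3/2) y := funext hker
    rw [hfun]; exact h
  set G := fun τ : ℝ => heatKernel α x (t - τ) with hG_def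
  have hGd : ∀ τ, HasDerivAt G (-(D (t - τ))) τ := by
    intro τ
    have h1 : HasDerivAt (fun τ : ℝ => t - τ) (-1) τ := by
      simpa using (hasDerivAt_id τ).const_sub t
    have h := (hkd (t - τ)).comp τ h1
    rw [mul_neg_one] at h
    exact h
  have hGc : Continuous G := hheatc.comp (continuous_const.sub continuous_id)
  have hIcc_sub : Icc a t ⊆ Icc a b := Icc_subset_Icc le_rfl htb
  have hφc : ContinuousOn φ (Icc a b) := fun τ hτ => (hφ τ hτ).continuousWithinAt
  set F := fun τ : ℝ => G τ * φ τ with hF_def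
  set F' := fun τ : ℝ => -(D (t - τ)) * φ τ + G τ * φ' τ with hF'_def
  have hFc : ContinuousOn F (Icc a t) :=
    (hGc.continuousOn).mul (hφc.mono hIcc_sub)
  have hF'deriv : ∀ τ ∈ Ioo a t, HasDerivAt F (F' τ) τ := by
    intro τ hτ
    have hτb : τ ∈ Icc a b := ⟨hτ.1.le, hτ.2.le.trans htb⟩
    have hφd : HasDerivAt φ (φ' τ) τ :=
      (hφ τ hτb).hasDerivAt (Icc_mem_nhds hτ.1 (lt_of_lt_of_le hτ.2 htb))
    exact (hGd τ).mul hφd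
  have hint1 : IntervalIntegrable (fun τ => -(D (t - τ)) * φ τ) MeasureTheory.volume a t := by
    apply ContinuousOn.intervalIntegrable
    rw [uIcc_of_le htle]
    exact ((hDc.comp (continuous_const.sub continuous_id)).neg.continuousOn).mul
      (hφc.mono hIcc_sub)
  have hint2 : IntervalIntegrable (fun τ => G τ * φ' τ) MeasureTheory.volume a t := by
    apply ContinuousOn.intervalIntegrable
    rw [uIcc_of_le htle]
    exact (hGc.continuousOn).mul (hφ'.mono hIcc_sub)
  have hF'int : IntervalIntegrable F' MeasureTheory.volume a t := hint1.add hint2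
  have hFTC := intervalIntegral.integral_eq_sub_of_hasDerivAt_of_le htle hFc hF'deriv hF'int
  have hFt : F t = 0 := by
    simp only [hF_def, hG_def, sub_self]
    have : heatKernel α x 0 = 0 := by simp [heatKernel]
    rw [this, zero_mul]
  have hFa : F a = heatKernel α x (t - a) * φ a := rfl
  rw [hFt, hFa, zero_sub] at hFTC
  have hsplit : ∫ τ in a..t, F' τ =
      (∫ τ in a..t, -(D (t - τ)) * φ τ) + ∫ τ in a..t, G τ * φ' τ :=
    intervalIntegral.integral_add hint1 hint2
  have hderiv_eq : (fun τ => deriv (fun τ => heatKernel α x (t - τ)) τ * φ τ) =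
      fun τ => -(D (t - τ)) * φ τ := by
    funext τ
    rw [show (fun τ => heatKernel α x (t - τ)) = G from rfl, (hGd τ).deriv]
  rw [hderiv_eq]
  rw [hsplit] at hFTC
  linarith [hFTC]
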